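/- (Lemma 3.1): For every p with 0 < p < ∞ there exists a constant C_p > 0, depending only on p and independent of d and m, such that for all d ∈ ℕ (d ≥ 1) and all real m ≥ 1: if m ≤ d then ln(#{h ∈ ℤ^d : Σ_{k=1}^d |h_k|^p ≤ m}) ≤ C_p · m · ln(2d/m), and if m ≥ d then ln(#{h ∈ ℤ^d : Σ_{k=1}^d |h_k|^p ≤ m}) ≤ C_p · d · ln(2m/d). -/

import Mathlib

noncomputable section

namespace L31

open Finset Real

lemma l1 {p : ℝ} (hp : 0 < p) {x : ℝ} (hx : 1 ≤ x) : 1 + p * Real.log x ≤ x ^ p := by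
  have hx0 : (0:ℝ) < x := lt_of_lt_of_le one_pos hx
  rw [Real.rpow_def_of_pos hx0]
  have := Real.add_one_le_exp (Real.log x * p)
  linarith

lemma l2 {p : ℝ} (hp : 0 < p) {x : ℝ} (hX : Real.exp (8 / p ^ 2) ≤ x) :
    Real.exp (-(x ^ p)) ≤ 1 / x ^ (2:ℕ) := by
  have h8 : (0:ℝ) ≤ 8 / p ^ 2 := by positivity
  have hx1 : (1:ℝ) ≤ x := (Real.one_le_exp h8).trans hX
  have hx0 : (0:ℝ) < x := lt_of_lt_of_le one_pos hx1
  have hlog : 8 / p ^ 2 ≤ Real.log x := by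
    rw [Real.le_log_iff_exp_le hx0]; exact hX
  have hlog0 : 0 ≤ Real.log x := le_trans h8 hlog
  -- x^p ≥ 2 log x
  have hxp : 2 * Real.log x ≤ x ^ p := by
    rw [Real.rpow_def_of_pos hx0]
    set u : ℝ := Real.log x * p with hu
    have hu0 : 0 ≤ u := mul_nonneg hlog0 hp.le
    have h1 : 1 + u / 2 ≤ Real.exp (u / 2) := by
      have := Real.add_one_le_exp (u / 2); linarith
    have h2 : (1 + u / 2) ^ 2 ≤ Real.exp u := by
      have := Real.exp_nonneg (u/2)
      calc (1 + u / 2) ^ 2 ≤ Real.exp (u/2) ^ 2 := by nlinarith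
        _ = Real.exp u := by rw [← Real.exp_nat_mul]; ring_nf
    have h3 : u ^ 2 / 4 ≤ Real.exp u := by nlinarith
    -- u^2/4 = p^2 (log x)^2 / 4 ≥ 2 log x
    have h4 : 2 * Real.log x ≤ u ^ 2 / 4 := by
      have hpl : 8 ≤ p ^ 2 * Real.log x := by
        rw [div_le_iff₀ (by positivity)] at hlog; linarith
      have : p^2 * Real.log x * Real.log x ≥ 8 * Real.log x :=
        mul_le_mul_of_nonneg_right hpl hlog0
      rw [hu]; nlinarith
    linarith
  calc Real.exp (-(x ^ p)) ≤ Real.exp (-(2 * Real.log x)) := by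
        apply Real.exp_le_exp.mpr; linarith
    _ = 1 / x ^ (2:ℕ) := by
        rw [Real.exp_neg, one_div]
        congr 1
        rw [show (2:ℝ) * Real.log x = ((2:ℕ):ℝ) * Real.log x by push_cast; ring,
          Real.exp_nat_mul, Real.exp_log hx0]

lemma l3aux (J : ℕ) (hJ : 1 ≤ J) (R : ℕ) (hR : J ≤ R) :
    ∑ j ∈ Finset.Icc (J + 1) R, (1:ℝ) / (j:ℝ) ^ (2:ℕ) ≤ 1 / (J:ℝ) - 1 / (R:ℝ) := by
  induction R, hR using Nat.le_induction with
  | base =>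
    rw [Finset.Icc_eq_empty (by omega)]
    simp
  | succ R hJR ih =>
    rw [Finset.sum_Icc_succ_top (by omega)]
    have hR1 : (1:ℝ) ≤ (R:ℝ) := by exact_mod_cast le_trans hJ hJR
    have h0 : (0:ℝ) < (R:ℝ) := by linarith
    have h1 : (0:ℝ) < ((R:ℝ) + 1) := by linarith
    have key : (1:ℝ) / ((R:ℕ)+1:ℝ) ^ (2:ℕ) ≤ 1 / (R:ℝ) - 1 / ((R:ℝ)+1) := by
      rw [div_sub_div _ _ (ne_of_gt h0) (ne_of_gt h1)]
      rw [div_le_div_iff₀ (by positivity) (by positivity)]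
      push_cast
      ring_nf
      nlinarith
    push_cast at *
    linarith

lemma l3 (J : ℕ) (hJ : 1 ≤ J) (R : ℕ) :
    ∑ j ∈ Finset.Icc (J + 1) R, (1:ℝ) / (j:ℝ) ^ (2:ℕ) ≤ 1 / (J:ℝ) := by
  rcases le_or_gt (J + 1) R with h | h
  · have := l3aux J hJ R (by omega)
    have hR0 : (0:ℝ) < (R:ℝ) := by exact_mod_cast Nat.lt_of_lt_of_le (by omega) h
    have h2 : (0:ℝ) ≤ 1 / (R:ℝ) := by positivity
    linarith
  · rw [Finset.Icc_eq_empty (by omega)]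
    simp

lemma l3' (R : ℕ) : ∑ j ∈ Finset.Icc 1 R, (1:ℝ) / (j:ℝ) ^ (2:ℕ) ≤ 2 := by
  rcases Nat.eq_zero_or_pos R with h | h
  · subst h; simp
  · have hins : Finset.Icc 1 R = insert 1 (Finset.Icc 2 R) := by
      ext x; simp [Finset.mem_Icc, Finset.mem_insert]; omega
    rw [hins, Finset.sum_insert (by simp)]
    have h2 := l3 1 le_rfl R
    have h3 : ((1:ℕ):ℝ) = 1 := by norm_num
    norm_num at h2 ⊢
    calc 1 + ∑ x ∈ Finset.Icc 2 R, ((x:ℝ)^(2:ℕ))⁻¹ ≤ 1 + 1 := by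
          refine add_le_add_right ?_ 1
          simpa using h2
      _ = 2 := by norm_num
lemma l4 {p : ℝ} (hp : 0 < p) {t : ℝ} (ht : 2 / p ≤ t) (R : ℕ) :
    ∑ n ∈ Finset.Icc 1 R, Real.exp (-(t * (n:ℝ) ^ p)) ≤ 2 * Real.exp (-t) := by
  have ht0 : 0 < t := lt_of_lt_of_le (by positivity) ht
  have hterm : ∀ n ∈ Finset.Icc 1 R,
      Real.exp (-(t * (n:ℝ) ^ p)) ≤ Real.exp (-t) * (1 / (n:ℝ) ^ (2:ℕ)) := by
    intro n hn
    rw [Finset.mem_Icc] at hn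
    have hn1 : (1:ℝ) ≤ (n:ℝ) := by exact_mod_cast hn.1
    have hln0 : 0 ≤ Real.log (n:ℝ) := Real.log_nonneg hn1
    have h1 := l1 hp hn1
    have htp : 2 ≤ t * p := by
      rw [div_le_iff₀ hp] at ht; linarith
    have key : t + 2 * Real.log (n:ℝ) ≤ t * (n:ℝ) ^ p := by
      have h2 : t * (1 + p * Real.log (n:ℝ)) ≤ t * (n:ℝ) ^ p :=
        mul_le_mul_of_nonneg_left h1 ht0.le
      have h3 : 2 * Real.log (n:ℝ) ≤ t * p * Real.log (n:ℝ) :=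
        mul_le_mul_of_nonneg_right htp hln0
      nlinarith
    calc Real.exp (-(t * (n:ℝ) ^ p)) ≤ Real.exp (-(t + 2 * Real.log (n:ℝ))) := by
          exact Real.exp_le_exp.mpr (by linarith)
      _ = Real.exp (-t) * (1 / (n:ℝ) ^ (2:ℕ)) := by
          rw [neg_add, Real.exp_add]
          congr 1
          rw [Real.exp_neg, one_div]
          congr 1
          rw [show (2:ℝ) * Real.log (n:ℝ) = ((2:ℕ):ℝ) * Real.log (n:ℝ) by push_cast; ring,
            Real.exp_nat_mul, Real.exp_log (by linarith)]
  calc ∑ n ∈ Finset.Icc 1 R, Real.exp (-(t * (n:ℝ) ^ p))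
      ≤ ∑ n ∈ Finset.Icc 1 R, Real.exp (-t) * (1 / (n:ℝ) ^ (2:ℕ)) :=
        Finset.sum_le_sum hterm
    _ = Real.exp (-t) * ∑ n ∈ Finset.Icc 1 R, (1:ℝ) / (n:ℝ) ^ (2:ℕ) := by
        rw [Finset.mul_sum]
    _ ≤ Real.exp (-t) * 2 := by
        exact mul_le_mul_of_nonneg_left (l3' R) (Real.exp_nonneg _)
    _ = 2 * Real.exp (-t) := by ring

lemma l5 {p : ℝ} (hp : 0 < p) {t : ℝ} (ht0 : 0 < t) (ht1 : t ≤ 1) (R : ℕ) :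
    ∑ n ∈ Finset.Icc 1 R, Real.exp (-(t * (n:ℝ) ^ p)) ≤
      (Real.exp (8 / p ^ 2) + 2) * t ^ (-(1/p)) := by
  set X : ℝ := Real.exp (8 / p ^ 2) with hXdef
  have hX1 : (1:ℝ) ≤ X := Real.one_le_exp (by positivity)
  set s : ℝ := t ^ (-(1/p)) with hsdef
  have hs0 : 0 < s := Real.rpow_pos_of_pos ht0 _
  have hs1 : (1:ℝ) ≤ s :=
    Real.one_le_rpow_of_pos_of_le_one_of_nonpos ht0 ht1 (neg_nonpos.mpr (by positivity))
  set J : ℕ := ⌈X * s⌉₊ with hJdef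
  have hXs0 : 0 < X * s := by positivity
  have hJ1 : 1 ≤ J := Nat.one_le_iff_ne_zero.mpr (by
    simp only [hJdef, ne_eq, Nat.ceil_eq_zero, not_le]; positivity)
  have hJge : X * s ≤ (J:ℝ) := Nat.le_ceil _
  have hJle : (J:ℝ) ≤ X * s + 1 := le_of_lt (Nat.ceil_lt_add_one hXs0.le)
  -- pointwise bound
  have hterm : ∀ n ∈ Finset.Icc 1 R, Real.exp (-(t * (n:ℝ) ^ p)) ≤
      (if n ≤ J then (1:ℝ) else t ^ (-(2/p)) * (1 / (n:ℝ) ^ (2:ℕ))) := by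
    intro n hn
    rw [Finset.mem_Icc] at hn
    have hn1 : (1:ℝ) ≤ (n:ℝ) := by exact_mod_cast hn.1
    have hn0 : (0:ℝ) < (n:ℝ) := by linarith
    by_cases hcase : n ≤ J
    · rw [if_pos hcase]
      calc Real.exp (-(t * (n:ℝ) ^ p)) ≤ Real.exp 0 := by
            apply Real.exp_le_exp.mpr
            have : 0 ≤ t * (n:ℝ) ^ p := by positivity
            linarith
        _ = 1 := Real.exp_zero
    · rw [if_neg hcase]
      push_neg at hcase
      have hnJ : (J:ℝ) ≤ (n:ℝ) := by exact_mod_cast hcase.le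
      -- x := t^(1/p) * n ≥ X
      set x : ℝ := t ^ (1/p) * (n:ℝ) with hxdef
      have htp0 : 0 < t ^ (1/p) := Real.rpow_pos_of_pos ht0 _
      have hxX : X ≤ x := by
        have h1 : X * s ≤ (n:ℝ) := le_trans hJge hnJ
        have h2 : X * s * t ^ (1/p) ≤ (n:ℝ) * t ^ (1/p) :=
          mul_le_mul_of_nonneg_right h1 htp0.le
        have h3 : s * t ^ (1/p) = 1 := by
          rw [hsdef, ← Real.rpow_add ht0]
          norm_num
        calc X = X * (s * t ^ (1/p)) := by rw [h3]; ring
          _ = X * s * t ^ (1/p) := by ring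
          _ ≤ (n:ℝ) * t ^ (1/p) := h2
          _ = x := by rw [hxdef]; ring
      have hx2 := l2 hp hxX
      have hxp : x ^ p = t * (n:ℝ) ^ p := by
        rw [hxdef, Real.mul_rpow htp0.le hn0.le, ← Real.rpow_mul ht0.le, one_div,
          inv_mul_cancel₀ (ne_of_gt hp), Real.rpow_one]
      rw [hxp] at hx2
      refine le_trans hx2 (le_of_eq ?_)
      have hxsq : x ^ (2:ℕ) = t ^ (2/p) * (n:ℝ) ^ (2:ℕ) := by
        have h2 : (t ^ (1/p)) ^ (2:ℕ) = t ^ (2/p) := by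
          rw [← Real.rpow_natCast (t ^ (1/p)), ← Real.rpow_mul ht0.le]
          congr 1
          push_cast; ring
        rw [hxdef, mul_pow, h2]
      rw [hxsq, Real.rpow_neg ht0.le]
      have h1 : t ^ (2/p) ≠ 0 := ne_of_gt (Real.rpow_pos_of_pos ht0 _)
      have h2 : ((n:ℝ)) ^ (2:ℕ) ≠ 0 := by positivity
      field_simp
  calc ∑ n ∈ Finset.Icc 1 R, Real.exp (-(t * (n:ℝ) ^ p))
      ≤ ∑ n ∈ Finset.Icc 1 R,
          (if n ≤ J then (1:ℝ) else t ^ (-(2/p)) * (1 / (n:ℝ) ^ (2:ℕ))) :=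
        Finset.sum_le_sum hterm
    _ ≤ (X + 2) * s := by
        rw [Finset.sum_ite]
        have hA : ∑ _x ∈ (Finset.Icc 1 R).filter (fun n => n ≤ J), (1:ℝ)
            ≤ (J:ℝ) := by
          rw [Finset.sum_const, nsmul_eq_mul, mul_one]
          have : (Finset.Icc 1 R).filter (fun n => n ≤ J) ⊆ Finset.Icc 1 J := by
            intro x hx
            simp only [Finset.mem_filter, Finset.mem_Icc] at hx ⊢
            omega
          calc ((((Finset.Icc 1 R).filter (fun n => n ≤ J)).card : ℝ))
              ≤ ((Finset.Icc 1 J).card : ℝ) := by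
                exact_mod_cast Finset.card_le_card this
            _ = (J:ℝ) := by rw [Nat.card_Icc]; norm_num
        have hB : ∑ n ∈ (Finset.Icc 1 R).filter (fun n => ¬ n ≤ J),
              t ^ (-(2/p)) * (1 / (n:ℝ) ^ (2:ℕ)) ≤ s := by
          have hsub : (Finset.Icc 1 R).filter (fun n => ¬ n ≤ J) ⊆
              Finset.Icc (J+1) R := by
            intro x hx
            simp only [Finset.mem_filter, Finset.mem_Icc] at hx ⊢
            omega
          have h1 : ∑ n ∈ (Finset.Icc 1 R).filter (fun n => ¬ n ≤ J),
                t ^ (-(2/p)) * (1 / (n:ℝ) ^ (2:ℕ)) ≤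
              ∑ n ∈ Finset.Icc (J+1) R, t ^ (-(2/p)) * (1 / (n:ℝ) ^ (2:ℕ)) := by
            apply Finset.sum_le_sum_of_subset_of_nonneg hsub
            intro i _ _; positivity
          have h2 : ∑ n ∈ Finset.Icc (J+1) R, t ^ (-(2/p)) * (1 / (n:ℝ) ^ (2:ℕ))
              = t ^ (-(2/p)) * ∑ n ∈ Finset.Icc (J+1) R, (1 / (n:ℝ) ^ (2:ℕ)) := by
            rw [Finset.mul_sum]
          have h3 := l3 J hJ1 R
          have ht2p : (0:ℝ) < t ^ (-(2/p)) := Real.rpow_pos_of_pos ht0 _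
          have h4 : t ^ (-(2/p)) * ∑ n ∈ Finset.Icc (J+1) R, (1 / (n:ℝ) ^ (2:ℕ))
              ≤ t ^ (-(2/p)) * (1 / (J:ℝ)) := by
            apply mul_le_mul_of_nonneg_left h3 ht2p.le
          have hJpos : (0:ℝ) < (J:ℝ) := by exact_mod_cast hJ1
          have h5 : t ^ (-(2/p)) * (1 / (J:ℝ)) ≤ t ^ (-(2/p)) * (1 / (X * s)) := by
            apply mul_le_mul_of_nonneg_left _ ht2p.le
            apply one_div_le_one_div_of_le hXs0 hJge
          have h6 : t ^ (-(2/p)) * (1 / (X * s)) ≤ s := by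
            have hts : t ^ (-(2/p)) = s * s := by
              rw [hsdef, ← Real.rpow_add ht0]; ring_nf
            rw [hts]
            rw [div_eq_mul_inv 1, one_mul, mul_inv]
            have hXinv : X⁻¹ ≤ 1 := by
              rw [inv_le_one_iff₀]; right; exact hX1
            calc s * s * (X⁻¹ * s⁻¹) = s * X⁻¹ * (s * s⁻¹) := by ring
              _ = s * X⁻¹ := by rw [mul_inv_cancel₀ (ne_of_gt hs0), mul_one]
              _ ≤ s * 1 := mul_le_mul_of_nonneg_left hXinv hs0.le
              _ = s := mul_one s
          linarith
        calc (∑ _x ∈ (Finset.Icc 1 R).filter (fun n => n ≤ J), (1:ℝ)) +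
              ∑ n ∈ (Finset.Icc 1 R).filter (fun n => ¬ n ≤ J),
                t ^ (-(2/p)) * (1 / (n:ℝ) ^ (2:ℕ))
            ≤ (J:ℝ) + s := add_le_add hA hB
          _ ≤ (X * s + 1) + s := by linarith
          _ ≤ (X + 2) * s := by nlinarith
lemma lsym {p : ℝ} (hp : 0 < p) (t : ℝ) (R : ℕ) :
    ∑ j ∈ Finset.Icc (-(R:ℤ)) (R:ℤ), Real.exp (-(t * |(j : ℝ)| ^ p)) =
      1 + 2 * ∑ n ∈ Finset.Icc 1 R, Real.exp (-(t * (n:ℝ) ^ p)) := by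
  induction R with
  | zero =>
    simp [Real.zero_rpow (ne_of_gt hp)]
  | succ R ih =>
    have hsplit : Finset.Icc (-((R:ℤ)+1)) ((R:ℤ)+1) =
        insert (-((R:ℤ)+1)) (insert ((R:ℤ)+1) (Finset.Icc (-(R:ℤ)) (R:ℤ))) := by
      ext x
      simp only [Finset.mem_Icc, Finset.mem_insert]
      omega
    rw [show (((R+1:ℕ)):ℤ) = (R:ℤ)+1 by push_cast; ring, hsplit]
    rw [Finset.sum_insert (by
      simp only [Finset.mem_insert, Finset.mem_Icc]
      omega)]
    rw [Finset.sum_insert (by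
      simp only [Finset.mem_Icc]
      omega)]
    rw [ih]
    rw [Finset.sum_Icc_succ_top (by omega)]
    have habs : |(((-((R:ℤ)+1)) : ℤ) : ℝ)| = (R:ℝ)+1 := by
      push_cast
      rw [abs_neg, abs_of_nonneg (by positivity)]
    have habs2 : |((((R:ℤ)+1) : ℤ) : ℝ)| = (R:ℝ)+1 := by
      push_cast
      rw [abs_of_nonneg (by positivity)]
    rw [habs, habs2]
    push_cast
    ring

lemma l6 {p : ℝ} (hp : 0 < p) (d : ℕ) {m t : ℝ} (hm : 1 ≤ m) (ht : 0 < t)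
    (R : ℕ) (hR : m ^ (1/p) ≤ (R:ℝ)) :
    Real.log (Set.ncard {h : Fin d → ℤ | ∑ k, (|h k| : ℝ) ^ p ≤ m}) ≤
      t * m + d * Real.log (1 + 2 * ∑ n ∈ Finset.Icc 1 R, Real.exp (-(t * (n:ℝ) ^ p))) := by
  set S : Set (Fin d → ℤ) := {h : Fin d → ℤ | ∑ k, (|h k| : ℝ) ^ p ≤ m} with hSdef
  set P : Finset (Fin d → ℤ) := Fintype.piFinset (fun _ : Fin d => Finset.Icc (-(R:ℤ)) (R:ℤ))
    with hPdef
  have hsub : ∀ h ∈ S, h ∈ P := by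
    intro h hh
    rw [Fintype.mem_piFinset]
    intro k
    rw [Finset.mem_Icc, ← abs_le]
    have hterm : |((h k : ℤ) : ℝ)| ^ p ≤ m := by
      refine le_trans ?_ hh
      exact Finset.single_le_sum (f := fun k => |((h k : ℤ) : ℝ)| ^ p)
        (fun i _ => Real.rpow_nonneg (abs_nonneg _) _) (Finset.mem_univ k)
    have h1 : |((h k : ℤ) : ℝ)| ≤ m ^ (1/p) := by
      have h2 : (|((h k : ℤ) : ℝ)| ^ p) ^ (1/p) ≤ m ^ (1/p) :=
        Real.rpow_le_rpow (Real.rpow_nonneg (abs_nonneg _) _) hterm (by positivity)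
      rwa [one_div, Real.rpow_rpow_inv (abs_nonneg _) (ne_of_gt hp), ← one_div] at h2
    have h3 : |((h k : ℤ) : ℝ)| ≤ (R:ℝ) := le_trans h1 hR
    have h4 : ((|h k| : ℤ) : ℝ) ≤ ((R:ℤ) : ℝ) := by
      rw [Int.cast_abs]
      exact_mod_cast h3
    exact_mod_cast h4
  have hfin : S.Finite := Set.Finite.subset P.finite_toSet hsub
  set F : Finset (Fin d → ℤ) := hfin.toFinset with hFdef
  have hFP : F ⊆ P := by
    intro h hh
    exact hsub h (hfin.mem_toFinset.mp hh)
  have h0S : (0 : Fin d → ℤ) ∈ S := by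
    rw [hSdef, Set.mem_setOf_eq]
    simp only [Pi.zero_apply, Int.cast_zero, abs_zero]
    rw [Real.zero_rpow (ne_of_gt hp)]
    simp only [Finset.sum_const_zero]
    linarith
  have hFne : 1 ≤ F.card :=
    Finset.card_pos.mpr ⟨0, hfin.mem_toFinset.mpr h0S⟩
  set Sig : ℝ := ∑ j ∈ Finset.Icc (-(R:ℤ)) (R:ℤ), Real.exp (-(t * |(j : ℝ)| ^ p)) with hSigdef
  set T : ℝ := ∑ n ∈ Finset.Icc 1 R, Real.exp (-(t * (n:ℝ) ^ p)) with hTdef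
  have hT0 : 0 ≤ T := Finset.sum_nonneg fun i _ => (Real.exp_pos _).le
  have hSigT : Sig = 1 + 2 * T := lsym hp t R
  have hSig1 : 1 ≤ Sig := by rw [hSigT]; linarith
  have key : (F.card : ℝ) ≤ Real.exp (t * m) * Sig ^ d := by
    calc (F.card : ℝ) = ∑ _h ∈ F, (1:ℝ) := by
          rw [Finset.sum_const, nsmul_eq_mul, mul_one]
      _ ≤ ∑ h ∈ F, Real.exp (t * m) * ∏ k, Real.exp (-(t * |((h k : ℤ) : ℝ)| ^ p)) := by
          apply Finset.sum_le_sum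
          intro h hh
          have hhS : ∑ k, (|h k| : ℝ) ^ p ≤ m := hfin.mem_toFinset.mp hh
          rw [← Real.exp_sum, ← Real.exp_add]
          rw [show (1:ℝ) = Real.exp 0 by rw [Real.exp_zero]]
          apply Real.exp_le_exp.mpr
          have hsum : ∑ k, -(t * |((h k : ℤ) : ℝ)| ^ p) = -(t * ∑ k, |((h k : ℤ) : ℝ)| ^ p) := by
            rw [Finset.mul_sum, ← Finset.sum_neg_distrib]
          rw [hsum]
          have : t * (∑ k, |((h k : ℤ) : ℝ)| ^ p) ≤ t * m :=
            mul_le_mul_of_nonneg_left hhS ht.le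
          linarith
      _ ≤ ∑ h ∈ P, Real.exp (t * m) * ∏ k, Real.exp (-(t * |((h k : ℤ) : ℝ)| ^ p)) := by
          apply Finset.sum_le_sum_of_subset_of_nonneg hFP
          intro i _ _
          positivity
      _ = Real.exp (t * m) * ∑ h ∈ P, ∏ k, Real.exp (-(t * |((h k : ℤ) : ℝ)| ^ p)) := by
          rw [Finset.mul_sum]
      _ = Real.exp (t * m) * ∏ _k : Fin d, Sig := by
          rw [Finset.prod_univ_sum]
      _ = Real.exp (t * m) * Sig ^ d := by
          rw [Finset.prod_const, Finset.card_univ, Fintype.card_fin]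
  have hlog : Real.log (Set.ncard S) ≤ Real.log (Real.exp (t * m) * Sig ^ d) := by
    rw [Set.ncard_eq_toFinset_card _ hfin]
    apply Real.log_le_log (by exact_mod_cast hFne) key
  refine le_trans hlog ?_
  rw [Real.log_mul (Real.exp_ne_zero _) (by positivity), Real.log_exp, Real.log_pow, hSigT]

end L31

open L31 in
/-- Lemma 3.1: for every `0 < p < ∞` there is a constant `C_p > 0`, independent of
`d` and `m`, such that for all `d ≥ 1` and real `m ≥ 1`,
`ln #{h ∈ ℤ^d : ∑ |h_k|^p ≤ m} ≤ C_p·m·ln(2d/m)` when `m ≤ d`, and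
`ln #{h ∈ ℤ^d : ∑ |h_k|^p ≤ m} ≤ C_p·d·ln(2m/d)` when `m ≥ d`. -/
theorem lemma3_1 (p : ℝ) (hp : 0 < p) :
    ∃ C > 0, ∀ (d : ℕ), 1 ≤ d → ∀ (m : ℝ), 1 ≤ m →
      (m ≤ d →
        Real.log (Set.ncard {h : Fin d → ℤ | ∑ k, (|h k| : ℝ) ^ p ≤ m}) ≤
          C * m * Real.log (2 * d / m)) ∧
      ((d : ℝ) ≤ m →
        Real.log (Set.ncard {h : Fin d → ℤ | ∑ k, (|h k| : ℝ) ^ p ≤ m}) ≤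
          C * d * Real.log (2 * m / d)) := by
  have hX1 : (1:ℝ) ≤ Real.exp (8 / p ^ 2) := Real.one_le_exp (by positivity)
  obtain ⟨X, hXdef⟩ : ∃ c : ℝ, c = Real.exp (8 / p ^ 2) := ⟨_, rfl⟩
  rw [← hXdef] at hX1
  have hlog2 : (0:ℝ) < Real.log 2 := Real.log_pos (by norm_num)
  have hlogX : (0:ℝ) < Real.log (2 * X + 5) := Real.log_pos (by nlinarith)
  obtain ⟨C₁, hC1⟩ : ∃ c : ℝ, c = 1 + (2/p + 2) / Real.log 2 := ⟨_, rfl⟩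
  obtain ⟨C₂, hC2⟩ : ∃ c : ℝ, c = (1/2 + Real.log (2 * X + 5)) / Real.log 2 + 1/p := ⟨_, rfl⟩
  have hC1pos : 0 < C₁ := by
    rw [hC1]
    have h1 : 0 < (2/p + 2) / Real.log 2 := by positivity
    linarith
  refine ⟨max C₁ C₂, lt_of_lt_of_le hC1pos (le_max_left _ _), ?_⟩
  intro d hd m hm
  have hRge : m ^ (1/p) ≤ ((⌈m ^ (1/p)⌉₊ : ℕ):ℝ) := Nat.le_ceil _
  obtain ⟨R, hRdef⟩ : ∃ r : ℕ, r = ⌈m ^ (1/p)⌉₊ := ⟨_, rfl⟩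
  rw [← hRdef] at hRge
  have hd0 : (0:ℝ) < (d:ℝ) := by exact_mod_cast hd
  have hm0 : (0:ℝ) < m := lt_of_lt_of_le one_pos hm
  constructor
  · -- case m ≤ d
    intro hmd
    obtain ⟨L, hLdef⟩ : ∃ c : ℝ, c = Real.log (2 * (d:ℝ) / m) := ⟨_, rfl⟩
    have h2L : (2:ℝ) ≤ 2 * (d:ℝ) / m := by
      rw [le_div_iff₀ hm0]; linarith
    have hL2 : Real.log 2 ≤ L := hLdef ▸ Real.log_le_log (by norm_num) h2L
    have hL0 : 0 < L := lt_of_lt_of_le hlog2 hL2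
    obtain ⟨t, htdef⟩ : ∃ c : ℝ, c = 2/p + L := ⟨_, rfl⟩
    have htp : 2/p ≤ t := by rw [htdef]; linarith
    have ht0 : 0 < t := lt_of_lt_of_le (by positivity) htp
    have hmain := l6 hp d hm ht0 R hRge
    obtain ⟨T, hTdef⟩ : ∃ c : ℝ, c = ∑ n ∈ Finset.Icc 1 R, Real.exp (-(t * (n:ℝ) ^ p)) :=
      ⟨_, rfl⟩
    rw [← hTdef] at hmain
    have hT0 : 0 ≤ T := hTdef ▸ Finset.sum_nonneg fun i _ => (Real.exp_pos _).le
    have hT : T ≤ 2 * Real.exp (-t) := hTdef ▸ l4 hp htp R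
    have hexp : Real.exp (-t) ≤ m / (2 * (d:ℝ)) := by
      rw [htdef, neg_add, Real.exp_add]
      have e1 : Real.exp (-(2/p)) ≤ 1 := Real.exp_le_one_iff.mpr (neg_nonpos.mpr (by positivity))
      have e2 : Real.exp (-L) = m / (2 * (d:ℝ)) := by
        rw [hLdef, Real.exp_neg, Real.exp_log (by positivity), inv_div]
      rw [e2]
      calc Real.exp (-(2/p)) * (m / (2 * (d:ℝ))) ≤ 1 * (m / (2 * (d:ℝ))) := by
            apply mul_le_mul_of_nonneg_right e1 (by positivity)
        _ = m / (2 * (d:ℝ)) := one_mul _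
    have hlogS : Real.log (1 + 2 * T) ≤ 2 * m / (d:ℝ) := by
      have he : 4 * (m / (2 * (d:ℝ))) = 2 * m / (d:ℝ) := by
        field_simp; ring
      have h1 : 1 + 2 * T ≤ 1 + 2 * m / (d:ℝ) := by nlinarith
      calc Real.log (1 + 2 * T) ≤ Real.log (1 + 2 * m / (d:ℝ)) :=
            Real.log_le_log (by linarith) h1
        _ ≤ (1 + 2 * m / (d:ℝ)) - 1 := Real.log_le_sub_one_of_pos (by positivity)
        _ = 2 * m / (d:ℝ) := by ring
    have hfinal : Real.log (Set.ncard {h : Fin d → ℤ | ∑ k, (|h k| : ℝ) ^ p ≤ m}) ≤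
        t * m + 2 * m := by
      refine le_trans hmain ?_
      have h3 : (d:ℝ) * Real.log (1 + 2 * T) ≤ (d:ℝ) * (2 * m / (d:ℝ)) :=
        mul_le_mul_of_nonneg_left hlogS hd0.le
      have hd' : (d:ℝ) * (2 * m / (d:ℝ)) = 2 * m := by field_simp
      rw [hd'] at h3
      linarith
    refine le_trans hfinal ?_
    have hkey : t * m + 2 * m ≤ C₁ * m * L := by
      have h1 : 2/p + 2 ≤ (2/p + 2) / Real.log 2 * L := by
        rw [div_mul_eq_mul_div, le_div_iff₀ hlog2]
        have h2 : (2/p + 2) * Real.log 2 ≤ (2/p + 2) * L :=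
          mul_le_mul_of_nonneg_left hL2 (by positivity)
        linarith
      have h2 : t + 2 ≤ C₁ * L := by rw [htdef, hC1]; linarith
      calc t * m + 2 * m = m * (t + 2) := by ring
        _ ≤ m * (C₁ * L) := mul_le_mul_of_nonneg_left h2 hm0.le
        _ = C₁ * m * L := by ring
    rw [← hLdef]
    refine le_trans hkey ?_
    have hC : C₁ ≤ max C₁ C₂ := le_max_left _ _
    have hmL : 0 ≤ m * L := by positivity
    calc C₁ * m * L = C₁ * (m * L) := by ring
      _ ≤ max C₁ C₂ * (m * L) := mul_le_mul_of_nonneg_right hC hmL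
      _ = max C₁ C₂ * m * L := by ring
  · -- case d ≤ m
    intro hdm
    obtain ⟨L, hLdef⟩ : ∃ c : ℝ, c = Real.log (2 * m / (d:ℝ)) := ⟨_, rfl⟩
    have h2L : (2:ℝ) ≤ 2 * m / (d:ℝ) := by
      rw [le_div_iff₀ hd0]; linarith
    have hL2 : Real.log 2 ≤ L := hLdef ▸ Real.log_le_log (by norm_num) h2L
    have hL0 : 0 < L := lt_of_lt_of_le hlog2 hL2
    obtain ⟨t, htdef⟩ : ∃ c : ℝ, c = (d:ℝ) / (2 * m) := ⟨_, rfl⟩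
    have ht0 : 0 < t := by rw [htdef]; positivity
    have ht1 : t ≤ 1 := by
      rw [htdef, div_le_one (by positivity)]; linarith
    have hmain := l6 hp d hm ht0 R hRge
    obtain ⟨T, hTdef⟩ : ∃ c : ℝ, c = ∑ n ∈ Finset.Icc 1 R, Real.exp (-(t * (n:ℝ) ^ p)) :=
      ⟨_, rfl⟩
    rw [← hTdef] at hmain
    have hT0 : 0 ≤ T := hTdef ▸ Finset.sum_nonneg fun i _ => (Real.exp_pos _).le
    have hT : T ≤ (X + 2) * t ^ (-(1/p)) := by
      rw [hTdef, hXdef]; exact l5 hp ht0 ht1 R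
    obtain ⟨sv, hsdef⟩ : ∃ c : ℝ, c = t ^ (-(1/p)) := ⟨_, rfl⟩
    rw [← hsdef] at hT
    have hs0 : 0 < sv := hsdef ▸ Real.rpow_pos_of_pos ht0 _
    have hs1 : (1:ℝ) ≤ sv := hsdef ▸
      Real.one_le_rpow_of_pos_of_le_one_of_nonpos ht0 ht1 (neg_nonpos.mpr (by positivity))
    have hSig : 1 + 2 * T ≤ (2 * X + 5) * sv := by nlinarith
    have hlogs : Real.log sv = (1/p) * L := by
      rw [hsdef, Real.log_rpow ht0, hLdef]
      have hinv : 2 * m / (d:ℝ) = t⁻¹ := by rw [htdef, inv_div]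
      rw [hinv, Real.log_inv]
      ring
    have hlogS : Real.log (1 + 2 * T) ≤ Real.log (2 * X + 5) + (1/p) * L := by
      calc Real.log (1 + 2 * T) ≤ Real.log ((2 * X + 5) * sv) :=
            Real.log_le_log (by linarith) hSig
        _ = Real.log (2 * X + 5) + Real.log sv := Real.log_mul (by positivity) (by positivity)
        _ = Real.log (2 * X + 5) + (1/p) * L := by rw [hlogs]
    have htm : t * m = (d:ℝ) / 2 := by
      rw [htdef]; field_simp
    have hfinal : Real.log (Set.ncard {h : Fin d → ℤ | ∑ k, (|h k| : ℝ) ^ p ≤ m}) ≤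
        (d:ℝ) / 2 + (d:ℝ) * (Real.log (2 * X + 5) + (1/p) * L) := by
      refine le_trans hmain ?_
      rw [htm]
      have h3 := mul_le_mul_of_nonneg_left hlogS hd0.le
      linarith
    refine le_trans hfinal ?_
    have hkey : (d:ℝ) / 2 + (d:ℝ) * (Real.log (2 * X + 5) + (1/p) * L) ≤ C₂ * (d:ℝ) * L := by
      rw [hC2]
      have h1 : (1/2 + Real.log (2 * X + 5)) ≤ (1/2 + Real.log (2 * X + 5)) / Real.log 2 * L := by
        rw [div_mul_eq_mul_div, le_div_iff₀ hlog2]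
        have h2 : (1/2 + Real.log (2 * X + 5)) * Real.log 2 ≤ (1/2 + Real.log (2 * X + 5)) * L :=
          mul_le_mul_of_nonneg_left hL2 (by positivity)
        linarith
      have h3 := mul_le_mul_of_nonneg_left h1 hd0.le
      linarith
    rw [← hLdef]
    refine le_trans hkey ?_
    have hC : C₂ ≤ max C₁ C₂ := le_max_right _ _
    have hdL : 0 ≤ (d:ℝ) * L := by positivity
    calc C₂ * (d:ℝ) * L = C₂ * ((d:ℝ) * L) := by ring
      _ ≤ max C₁ C₂ * ((d:ℝ) * L) := mul_le_mul_of_nonneg_right hC hdL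
      _ = max C₁ C₂ * (d:ℝ) * L := by ring
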